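/- arXiv:2511.12636 — 2 statements merged into one kernel-verified Lean document; each statement's English description precedes it below -/
import Mathlib

section
/- Let ν be a locally finite Borel measure on X \ {x}, where X is a metric space and x ∈ X, and suppose that for some constant C and all ρ > 0 one has ρ^m · ν ≤ C·η as measures on X \ closure(B_ρ(x)), where η is a finite Borel measure on X. Then ∫ φ(x') d(x,x')^m dν(x') ≤ C·b^m ∫ φ dη for every b > 1 and every continuous nonnegative φ compactly supported in X \ {x}; consequently ∫ φ(x') d(x,x')^m dν(x') ≤ C ∫ φ dη. -/
open MeasureTheory Metric Filter Set
open scoped ENNReal Topology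

/-- Annular decomposition estimate: if `ρ^m · ν ≤ C·η` outside every closed ball about `x`,
then `∫ φ(x') d(x,x')^m dν ≤ C·b^m ∫ φ dη` for every `b > 1`, and hence
`∫ φ(x') d(x,x')^m dν ≤ C ∫ φ dη`, for every continuous nonnegative `φ` compactly
supported in `X \ {x}`. -/
theorem stmt8 {X : Type*} [MetricSpace X] [MeasurableSpace X] [BorelSpace X]
    {m : ℕ} (x : X) (ν η : Measure X) [IsFiniteMeasure η]
    (hloc : ∀ K : Set X, IsCompact K → K ⊆ {x}ᶜ → ν K ≠ ∞)
    (C : ℝ≥0∞)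
    (hdom : ∀ ρ > (0:ℝ), ∀ B : Set X, MeasurableSet B → B ⊆ (closedBall x ρ)ᶜ →
      ENNReal.ofReal (ρ ^ m) * ν B ≤ C * η B)
    (φ : X → ℝ) (hφc : Continuous φ) (hφs : HasCompactSupport φ)
    (hφ0 : 0 ≤ φ) (hφx : tsupport φ ⊆ {x}ᶜ) :
    (∀ b : ℝ, 1 < b →
      ∫⁻ x', ENNReal.ofReal (φ x') * ENNReal.ofReal (dist x x' ^ m) ∂ν ≤
        C * ENNReal.ofReal (b ^ m) * ∫⁻ x', ENNReal.ofReal (φ x') ∂η) ∧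
    ∫⁻ x', ENNReal.ofReal (φ x') * ENNReal.ofReal (dist x x' ^ m) ∂ν ≤
      C * ∫⁻ x', ENNReal.ofReal (φ x') ∂η := by
  set f : X → ℝ≥0∞ := fun x' => ENNReal.ofReal (φ x') * ENNReal.ofReal (dist x x' ^ m) with hf
  set I := ∫⁻ x', ENNReal.ofReal (φ x') ∂η with hI
  have hφxz : φ x = 0 := by
    by_contra h
    exact (hφx (subset_tsupport φ h)) rfl
  have hmain : ∀ b : ℝ, 1 < b →
      ∫⁻ x', f x' ∂ν ≤ C * ENNReal.ofReal (b ^ m) * I := by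
    intro b hb
    have hb0 : (0:ℝ) < b := lt_trans one_pos hb
    set A : ℤ → Set X := fun i => (dist x) ⁻¹' Ioc (b ^ i) (b ^ (i + 1)) with hA
    have hdistm : Measurable (dist x : X → ℝ) := (continuous_const.dist continuous_id).measurable
    have hAm : ∀ i, MeasurableSet (A i) := fun i => hdistm measurableSet_Ioc
    have hmono : StrictMono (fun n : ℤ => (b:ℝ) ^ n) := zpow_right_strictMono₀ hb
    have hIocd : Pairwise (Function.onFun Disjoint fun n : ℤ => Ioc (b ^ n) (b ^ (n + 1))) := by
      intro i j hij
      rcases hij.lt_or_gt with h | h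
      · exact Set.Ioc_disjoint_Ioc.2 <| (min_le_left _ _).trans <|
          le_trans (hmono.monotone (by omega)) (le_max_right _ _)
      · exact Set.Ioc_disjoint_Ioc.2 <| (min_le_right _ _).trans <|
          le_trans (hmono.monotone (by omega)) (le_max_left _ _)
    have hAd : Pairwise (Function.onFun Disjoint A) := fun i j hij => (hIocd hij).preimage _
    have hUnion : (⋃ i, A i) = {x}ᶜ := by
      ext x'
      simp only [mem_iUnion, hA, mem_preimage, mem_compl_iff, mem_singleton_iff]
      constructor
      · rintro ⟨i, hi⟩ rfl
        rw [dist_self] at hi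
        exact absurd hi.1 (not_lt.2 (zpow_pos hb0 i).le)
      · intro hx'
        exact exists_mem_Ioc_zpow (dist_pos.2 (Ne.symm hx')) hb
    -- reduce lintegral to the union
    have hred : ∫⁻ x', f x' ∂ν = ∫⁻ x' in ⋃ i, A i, f x' ∂ν := by
      rw [hUnion]
      rw [← lintegral_indicator (measurableSet_singleton x).compl f]
      congr 1
      ext x'
      by_cases hx' : x' = x
      · subst hx'
        simp [hf, hφxz, indicator]
      · simp [indicator, hx']
    rw [hred, lintegral_iUnion hAm hAd]
    -- per-annulus bound
    have hann : ∀ i : ℤ, ∫⁻ x' in A i, f x' ∂ν ≤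
        C * ENNReal.ofReal (b ^ m) * ∫⁻ x' in A i, ENNReal.ofReal (φ x') ∂η := by
      intro i
      have hρ : (0:ℝ) < b ^ i := zpow_pos hb0 i
      -- bound dist^m on A i
      have h1 : ∫⁻ x' in A i, f x' ∂ν ≤
          ENNReal.ofReal (b ^ m) * (ENNReal.ofReal ((b ^ i) ^ m) *
            ∫⁻ x' in A i, ENNReal.ofReal (φ x') ∂ν) := by
        rw [← mul_assoc, ← lintegral_const_mul' _ _ (by
          exact ENNReal.mul_ne_top ENNReal.ofReal_ne_top ENNReal.ofReal_ne_top)]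
        apply setLIntegral_mono' (hAm i)
        intro x' hx'
        simp only [hA, mem_preimage, mem_Ioc] at hx'
        have hdle : dist x x' ^ m ≤ b ^ m * (b ^ i : ℝ) ^ m := by
          have : dist x x' ^ m ≤ (b ^ (i+1) : ℝ) ^ m :=
            pow_le_pow_left₀ dist_nonneg hx'.2 m
          calc dist x x' ^ m ≤ (b ^ (i+1) : ℝ) ^ m := this
            _ = b ^ m * (b ^ i : ℝ) ^ m := by
                rw [zpow_add_one₀ (ne_of_gt hb0), mul_comm (b ^ i) b, mul_pow]
        calc ENNReal.ofReal (φ x') * ENNReal.ofReal (dist x x' ^ m)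
            ≤ ENNReal.ofReal (φ x') * ENNReal.ofReal (b ^ m * (b ^ i : ℝ) ^ m) :=
              mul_le_mul_right (ENNReal.ofReal_le_ofReal hdle) _
          _ = ENNReal.ofReal (b ^ m) * ENNReal.ofReal ((b ^ i : ℝ) ^ m) *
                ENNReal.ofReal (φ x') := by
              rw [ENNReal.ofReal_mul (by positivity)]; ring
      -- compare measures on A i
      have h2 : ENNReal.ofReal ((b ^ i) ^ m) * ∫⁻ x' in A i, ENNReal.ofReal (φ x') ∂ν ≤
          C * ∫⁻ x' in A i, ENNReal.ofReal (φ x') ∂η := by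
        have hle : (ENNReal.ofReal ((b ^ i) ^ m) • ν).restrict (A i) ≤
            (C • η).restrict (A i) := by
          refine Measure.le_iff.2 fun s hs => ?_
          rw [Measure.restrict_apply hs, Measure.restrict_apply hs]
          simp only [Measure.smul_apply, smul_eq_mul]
          refine hdom (b ^ i) hρ (s ∩ A i) (hs.inter (hAm i)) ?_
          intro x' hx'
          have := hx'.2
          simp only [hA, mem_preimage, mem_Ioc] at this
          simp only [mem_compl_iff, mem_closedBall]
          rw [dist_comm]
          exact not_le.2 this.1
        calc ENNReal.ofReal ((b ^ i) ^ m) * ∫⁻ x' in A i, ENNReal.ofReal (φ x') ∂ν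
            = ∫⁻ x', ENNReal.ofReal (φ x')
                ∂((ENNReal.ofReal ((b ^ i) ^ m) • ν).restrict (A i)) := by
              rw [Measure.restrict_smul, lintegral_smul_measure, smul_eq_mul]
          _ ≤ ∫⁻ x', ENNReal.ofReal (φ x') ∂((C • η).restrict (A i)) :=
              lintegral_mono' hle (le_refl _)
          _ = C * ∫⁻ x' in A i, ENNReal.ofReal (φ x') ∂η := by
              rw [Measure.restrict_smul, lintegral_smul_measure, smul_eq_mul]
      calc ∫⁻ x' in A i, f x' ∂ν
          ≤ ENNReal.ofReal (b ^ m) * (ENNReal.ofReal ((b ^ i) ^ m) *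
              ∫⁻ x' in A i, ENNReal.ofReal (φ x') ∂ν) := h1
        _ ≤ ENNReal.ofReal (b ^ m) * (C * ∫⁻ x' in A i, ENNReal.ofReal (φ x') ∂η) :=
            mul_le_mul_right h2 _
        _ = C * ENNReal.ofReal (b ^ m) * ∫⁻ x' in A i, ENNReal.ofReal (φ x') ∂η := by ring
    calc ∑' i, ∫⁻ x' in A i, f x' ∂ν
        ≤ ∑' i, C * ENNReal.ofReal (b ^ m) * ∫⁻ x' in A i, ENNReal.ofReal (φ x') ∂η :=
          ENNReal.tsum_le_tsum hann
      _ = C * ENNReal.ofReal (b ^ m) *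
            ∑' i, ∫⁻ x' in A i, ENNReal.ofReal (φ x') ∂η := by rw [ENNReal.tsum_mul_left]
      _ = C * ENNReal.ofReal (b ^ m) *
            ∫⁻ x' in ⋃ i, A i, ENNReal.ofReal (φ x') ∂η := by
          rw [lintegral_iUnion hAm hAd]
      _ ≤ C * ENNReal.ofReal (b ^ m) * I :=
          mul_le_mul_right (setLIntegral_le_lintegral _ _) _
  refine ⟨hmain, ?_⟩
  by_cases hCI : C * I = ∞
  · exact hCI ▸ le_top
  by_cases hI0 : I = 0
  · have := hmain 2 one_lt_two
    rw [hI0, mul_zero] at this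
    simpa [hI0] using this
  by_cases hC0 : C = 0
  · have := hmain 2 one_lt_two
    rw [hC0, zero_mul, zero_mul] at this
    simpa [hC0] using this
  have hC : C ≠ ∞ := fun h => hCI (by rw [h, ENNReal.top_mul hI0])
  have hIt : I ≠ ∞ := fun h => hCI (by rw [h, ENNReal.mul_top hC0])
  -- take the limit b → 1⁺
  have htend : Tendsto (fun b : ℝ => C * ENNReal.ofReal (b ^ m) * I)
      (𝓝[>] (1:ℝ)) (𝓝 (C * I)) := by
    have h1 : Tendsto (fun b : ℝ => ENNReal.ofReal (b ^ m)) (𝓝[>] (1:ℝ))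
        (𝓝 1) := by
      have : Tendsto (fun b : ℝ => ENNReal.ofReal (b ^ m)) (𝓝 (1:ℝ))
          (𝓝 (ENNReal.ofReal ((1:ℝ) ^ m))) :=
        (ENNReal.continuous_ofReal.comp (continuous_pow m)).continuousAt
      simpa using this.mono_left nhdsWithin_le_nhds
    have h2 := ENNReal.Tendsto.const_mul (a := C) h1 (Or.inl one_ne_zero)
    have h3 := ENNReal.Tendsto.mul_const h2 (Or.inr hIt)
    simpa [mul_one] using h3
  exact ge_of_tendsto htend (eventually_nhdsWithin_of_forall fun b hb => hmain b hb)
end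

section
/- Let Π : X → ℝ^m be an α-Hölder continuous map on a metric space X with Hölder seminorm ‖Π‖_{C^{0,α}}, and let B ⊂ X be a Borel set. Then ∫_{ℝ^m} ℋ⁰(B ∩ Π⁻¹(y)) dℋ^m(y) ≤ ‖Π‖_{C^{0,α}}^m · ℋ^{αm}(B). -/
open MeasureTheory Metric Filter Set
open scoped ENNReal Topology

/-- If a set has finite `d`-dimensional Hausdorff measure, then for every `r > 0` it
admits a countable cover by sets of diameter at most `r`. -/
lemma aux_cover14 {X : Type*} [MetricSpace X] [MeasurableSpace X] [BorelSpace X]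
    {d : ℝ} {s : Set X} (h : μH[d] s ≠ ∞) {r : ℝ≥0∞} (hr : 0 < r) :
    ∃ t : ℕ → Set X, s ⊆ ⋃ n, t n ∧ ∀ n, EMetric.diam (t n) ≤ r := by
  by_contra hcon
  push_neg at hcon
  apply h
  rw [MeasureTheory.Measure.hausdorffMeasure_apply]
  refine eq_top_iff.2 ?_
  have hinner : (⊤ : ℝ≥0∞) ≤
      ⨅ (t : ℕ → Set X) (_ : s ⊆ ⋃ n, t n) (_ : ∀ n, EMetric.diam (t n) ≤ r),
        ∑' n, ⨆ _ : (t n).Nonempty, EMetric.diam (t n) ^ d := by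
    refine le_iInf fun t => le_iInf fun h1 => le_iInf fun h2 => ?_
    obtain ⟨n, hn⟩ := hcon t h1
    exact absurd (h2 n) (not_le.2 hn)
  refine hinner.trans ?_
  exact le_iSup₂ (f := fun (r' : ℝ≥0∞) (_ : 0 < r') =>
    ⨅ (t : ℕ → Set X) (_ : s ⊆ ⋃ n, t n) (_ : ∀ n, EMetric.diam (t n) ≤ r'),
      ∑' n, ⨆ _ : (t n).Nonempty, EMetric.diam (t n) ^ d) r hr

/-- Coarea-type inequality for Hölder maps (Federer 2.10.11):
`∫ ℋ⁰(B ∩ P⁻¹(y)) dℋ^m(y) ≤ ‖P‖_{C^{0,α}}^m · ℋ^{αm}(B)`. -/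
theorem stmt14 {X : Type*} [MetricSpace X] [MeasurableSpace X] [BorelSpace X]
    {m : ℕ} (P : X → EuclideanSpace ℝ (Fin m))
    (α K : ℝ) (hα : 0 < α) (hα1 : α ≤ 1) (hK : 0 ≤ K)
    (hHolder : ∀ x x' : X, dist (P x) (P x') ≤ K * dist x x' ^ α)
    (B : Set X) (hB : MeasurableSet B) :
    (∫⁻ y, μH[(0 : ℝ)] (B ∩ P ⁻¹' {y})
        ∂(μH[(m : ℝ)] : Measure (EuclideanSpace ℝ (Fin m)))) ≤
      ENNReal.ofReal (K ^ m) * μH[α * m] B := by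
  classical
  by_cases hfin : μH[α * (m : ℝ)] B = ∞
  · by_cases hKm : K ^ m = 0
    · -- K = 0 and m ≠ 0 : the map is constant
      have hm : m ≠ 0 := by rintro rfl; simp at hKm
      have hK0 : K = 0 := pow_eq_zero_iff hm |>.mp hKm
      have hPc : ∀ x x' : X, P x = P x' := by
        intro x x'
        have h := hHolder x x'
        rw [hK0, zero_mul] at h
        exact dist_le_zero.mp h
      haveI : NoAtoms (μH[(m : ℝ)] : Measure (EuclideanSpace ℝ (Fin m))) :=
        MeasureTheory.Measure.noAtoms_hausdorff _
          (by exact_mod_cast Nat.pos_of_ne_zero hm)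
      rcases isEmpty_or_nonempty X with hX | hX
      · have h0 : ∀ y : EuclideanSpace ℝ (Fin m), B ∩ P ⁻¹' {y} = (∅ : Set X) :=
          fun y => eq_empty_of_isEmpty _
        simp only [h0, measure_empty, lintegral_const, zero_mul]
        exact zero_le
      · obtain ⟨x₀⟩ := hX
        calc (∫⁻ y, μH[(0 : ℝ)] (B ∩ P ⁻¹' {y})
              ∂(μH[(m : ℝ)] : Measure (EuclideanSpace ℝ (Fin m))))
            ≤ ∫⁻ y, ({P x₀} : Set (EuclideanSpace ℝ (Fin m))).indicator
                (fun _ => (⊤ : ℝ≥0∞)) y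
              ∂(μH[(m : ℝ)] : Measure (EuclideanSpace ℝ (Fin m))) := by
              refine lintegral_mono fun y => ?_
              by_cases hy : y = P x₀
              · subst hy; simp
              · have : B ∩ P ⁻¹' {y} = ∅ := by
                  ext x
                  simp only [mem_inter_iff, mem_preimage, mem_singleton_iff, mem_empty_iff_false,
                    iff_false, not_and]
                  intro _ hxy
                  exact hy (hxy ▸ hPc x₀ x ▸ rfl)
                rw [this]
                simp
          _ ≤ ⊤ * μH[(m : ℝ)] ({P x₀} : Set (EuclideanSpace ℝ (Fin m))) :=
              lintegral_indicator_const_le _ _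
          _ = 0 := by rw [NullSingletonClass.measure_singleton (self := this), mul_zero]
          _ ≤ _ := zero_le
    · have hne : ENNReal.ofReal (K ^ m) ≠ 0 := by
        simp only [ne_eq, ENNReal.ofReal_eq_zero, not_le]
        exact lt_of_le_of_ne (pow_nonneg hK m) (Ne.symm hKm)
      rw [hfin, ENNReal.mul_top hne]
      exact le_top
  · -- main case : μH[α m] B < ∞
    -- Hölder continuity in `HolderOnWith` form
    have hcoe : (K.toNNReal : ℝ≥0∞) = ENNReal.ofReal K := rfl
    have hHol : ∀ s : Set X, HolderOnWith K.toNNReal α.toNNReal P s := by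
      intro s x _ x' _
      rw [edist_dist, edist_dist, Real.coe_toNNReal α hα.le, hcoe]
      calc ENNReal.ofReal (dist (P x) (P x'))
          ≤ ENNReal.ofReal (K * dist x x' ^ α) :=
            ENNReal.ofReal_le_ofReal (hHolder x x')
        _ = ENNReal.ofReal K * ENNReal.ofReal (dist x x') ^ α := by
            rw [ENNReal.ofReal_mul hK, ENNReal.ofReal_rpow_of_nonneg dist_nonneg hα.le]
    have hpow : ((K.toNNReal : ℝ≥0∞)) ^ ((m : ℕ) : ℝ) = ENNReal.ofReal (K ^ m) := by
      rw [hcoe, ENNReal.ofReal_rpow_of_nonneg hK (Nat.cast_nonneg m), Real.rpow_natCast]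
    have himg : ∀ s : Set X,
        μH[(m : ℝ)] (P '' s) ≤ ENNReal.ofReal (K ^ m) * μH[α * (m : ℝ)] s := by
      intro s
      have h := (hHol s).hausdorffMeasure_image_le
        (Real.toNNReal_pos.2 hα) (Nat.cast_nonneg m : (0 : ℝ) ≤ (m : ℝ))
      rwa [Real.coe_toNNReal α hα.le, hpow] at h
    -- countable covers with small mesh
    have hcov : ∀ n : ℕ, ∃ t : ℕ → Set X, B ⊆ ⋃ i, t i ∧
        ∀ i, EMetric.diam (t i) ≤ ENNReal.ofReal (1 / (n + 1)) := by
      intro n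
      exact aux_cover14 hfin (ENNReal.ofReal_pos.2 (by positivity))
    choose t ht1 ht2 using hcov
    set D : ℕ → ℕ → Set X :=
      fun n i => B ∩ disjointed (fun j => closure (t n j)) i with hD
    have hDsub : ∀ n i, D n i ⊆ closure (t n i) :=
      fun n i => inter_subset_right.trans (disjointed_subset _ i)
    have hDmeas : ∀ n i, MeasurableSet (D n i) := fun n i =>
      hB.inter (MeasurableSet.disjointed (fun j => isClosed_closure.measurableSet) i)
    have hDdisj : ∀ n, Pairwise (Function.onFun Disjoint (D n)) := fun n i j hij =>
      (disjoint_disjointed (fun j => closure (t n j)) hij).mono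
        inter_subset_right inter_subset_right
    have hDunion : ∀ n, ⋃ i, D n i = B := by
      intro n
      rw [hD]
      simp only [← inter_iUnion]
      rw [iUnion_disjointed]
      exact inter_eq_self_of_subset_left
        ((ht1 n).trans (iUnion_mono fun i => subset_closure))
    have hDdiam : ∀ n i, EMetric.diam (D n i) ≤ ENNReal.ofReal (1 / (n + 1)) := by
      intro n i
      refine le_trans (EMetric.diam_mono (hDsub n i)) ?_
      rw [EMetric.diam_closure]
      exact ht2 n i
    -- measurable hulls of the images
    have hSex : ∀ n i, ∃ S : Set (EuclideanSpace ℝ (Fin m)),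
        P '' D n i ⊆ S ∧ MeasurableSet S ∧
          μH[(m : ℝ)] S = μH[(m : ℝ)] (P '' D n i) :=
      fun n i => exists_measurable_superset _ _
    choose S hS1 hS2 hS3 using hSex
    set f : ℕ → EuclideanSpace ℝ (Fin m) → ℝ≥0∞ :=
      fun n y => ∑' i, (S n i).indicator (fun _ => (1 : ℝ≥0∞)) y with hf
    have hfmeas : ∀ n, Measurable (f n) := fun n =>
      Measurable.ennreal_tsum fun i => measurable_const.indicator (hS2 n i)
    have hint : ∀ n, (∫⁻ y, f n y
        ∂(μH[(m : ℝ)] : Measure (EuclideanSpace ℝ (Fin m)))) ≤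
        ENNReal.ofReal (K ^ m) * μH[α * (m : ℝ)] B := by
      intro n
      rw [hf]
      rw [lintegral_tsum fun i => (measurable_const.indicator (hS2 n i)).aemeasurable]
      calc (∑' i, ∫⁻ y, (S n i).indicator (fun _ => (1 : ℝ≥0∞)) y
              ∂(μH[(m : ℝ)] : Measure (EuclideanSpace ℝ (Fin m))))
          = ∑' i, μH[(m : ℝ)] (S n i) := by
            refine tsum_congr fun i => ?_
            rw [lintegral_indicator (hS2 n i)]
            simp
        _ = ∑' i, μH[(m : ℝ)] (P '' D n i) := tsum_congr fun i => hS3 n i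
        _ ≤ ∑' i, ENNReal.ofReal (K ^ m) * μH[α * (m : ℝ)] (D n i) :=
            ENNReal.tsum_le_tsum fun i => himg _
        _ = ENNReal.ofReal (K ^ m) * ∑' i, μH[α * (m : ℝ)] (D n i) :=
            ENNReal.tsum_mul_left
        _ = ENNReal.ofReal (K ^ m) * μH[α * (m : ℝ)] B := by
            rw [← measure_iUnion (hDdisj n) (hDmeas n), hDunion n]
    -- the key counting estimate
    have key : ∀ (y : EuclideanSpace ℝ (Fin m)) (F : Finset X),
        ↑F ⊆ B ∩ P ⁻¹' {y} →
        (F.card : ℝ≥0∞) ≤ Filter.liminf (fun n => f n y) Filter.atTop := by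
      intro y F hF
      obtain ⟨ε, hε0, hεd⟩ : ∃ ε : ℝ, 0 < ε ∧
          ∀ x ∈ F, ∀ x' ∈ F, x ≠ x' → ε ≤ dist x x' := by
        set T := (F ×ˢ F).filter (fun p => p.1 ≠ p.2) with hT
        rcases T.eq_empty_or_nonempty with hTe | hTne
        · refine ⟨1, one_pos, fun x hx x' hx' hne => ?_⟩
          have hmem : ((x, x') : X × X) ∈ T :=
            Finset.mem_filter.2 ⟨Finset.mem_product.2 ⟨hx, hx'⟩, hne⟩
          rw [hTe] at hmem
          exact absurd hmem (Finset.notMem_empty _)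
        · refine ⟨T.inf' hTne (fun p => dist p.1 p.2), ?_, ?_⟩
          · rw [Finset.lt_inf'_iff]
            rintro ⟨x, x'⟩ hp
            exact dist_pos.2 (Finset.mem_filter.1 hp).2
          · intro x hx x' hx' hne
            have hmem : ((x, x') : X × X) ∈ T :=
              Finset.mem_filter.2 ⟨Finset.mem_product.2 ⟨hx, hx'⟩, hne⟩
            exact Finset.inf'_le (fun p => dist p.1 p.2) hmem
      obtain ⟨N, hN⟩ := exists_nat_one_div_lt hε0
      refine le_liminf_of_le (by isBoundedDefault) ?_
      refine Filter.eventually_atTop.2 ⟨N, fun n hn => ?_⟩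
      have hmesh : (1 : ℝ) / (n + 1) < ε := by
        refine lt_of_le_of_lt ?_ hN
        have h1 : (0 : ℝ) < N + 1 := by positivity
        have h2 : (N : ℝ) + 1 ≤ (n : ℝ) + 1 := by
          have : (N : ℝ) ≤ n := by exact_mod_cast hn
          linarith
        exact one_div_le_one_div_of_le h1 h2
      have hex : ∀ x ∈ F, ∃ i, x ∈ D n i := by
        intro x hx
        have hxB : x ∈ B := (hF hx).1
        rw [← hDunion n] at hxB
        exact mem_iUnion.mp hxB
      set g : X → ℕ := fun x => if h : ∃ i, x ∈ D n i then h.choose else 0 with hg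
      have hgmem : ∀ x ∈ F, x ∈ D n (g x) := by
        intro x hx
        have h := hex x hx
        simp only [hg, dif_pos h]
        exact h.choose_spec
      have hginj : Set.InjOn g F := by
        intro x hx x' hx' hxx'
        by_contra hne
        have h1 := hgmem x hx
        have h2 := hgmem x' hx'
        rw [hxx'] at h1
        have hd : dist x x' ≤ 1 / (n + 1) := by
          have he := (EMetric.edist_le_diam_of_mem h1 h2).trans (hDdiam n _)
          exact (edist_le_ofReal (by positivity)).1 he
        have := hεd x hx x' hx' hne
        linarith
      calc (F.card : ℝ≥0∞) = ((F.image g).card : ℝ≥0∞) := by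
            rw [Finset.card_image_of_injOn hginj]
        _ = ∑ _i ∈ F.image g, (1 : ℝ≥0∞) := by
            rw [Finset.sum_const, nsmul_eq_mul, mul_one]
        _ = ∑ i ∈ F.image g, (S n i).indicator (fun _ => (1 : ℝ≥0∞)) y := by
            refine Finset.sum_congr rfl fun i hi => ?_
            obtain ⟨x, hxF, rfl⟩ := Finset.mem_image.1 hi
            have hyx : P x = y := (hF hxF).2
            have hyS : y ∈ S n (g x) := hS1 n (g x) ⟨x, hgmem x hxF, hyx⟩
            rw [indicator_of_mem hyS]
        _ ≤ f n y := ENNReal.sum_le_tsum _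
    -- pointwise bound
    have hpt : ∀ y : EuclideanSpace ℝ (Fin m),
        μH[(0 : ℝ)] (B ∩ P ⁻¹' {y}) ≤ Filter.liminf (fun n => f n y) Filter.atTop := by
      intro y
      by_cases hfin' : (B ∩ P ⁻¹' {y}).Finite
      · have hset : B ∩ P ⁻¹' {y} = ⋃ x ∈ hfin'.toFinset, ({x} : Set X) := by
          ext x
          simp [Set.Finite.mem_toFinset]
        have hone : ∀ x : X, μH[(0 : ℝ)] ({x} : Set X) = 1 := fun x =>
          MeasureTheory.Measure.hausdorffMeasure_zero_singleton x
        have hcard : μH[(0 : ℝ)] (B ∩ P ⁻¹' {y}) ≤ (hfin'.toFinset.card : ℝ≥0∞) := by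
          refine le_trans (le_of_eq (congrArg (μH[(0 : ℝ)]) hset)) ?_
          refine le_trans (measure_biUnion_finset_le _ _) ?_
          simp [hone]
        exact hcard.trans (key y hfin'.toFinset (by rw [Set.Finite.coe_toFinset]))
      · have htop : ∀ k : ℕ, (k : ℝ≥0∞) ≤ Filter.liminf (fun n => f n y) Filter.atTop := by
          intro k
          obtain ⟨F, hFs, hFc⟩ := Set.Infinite.exists_subset_card_eq hfin' k
          exact hFc ▸ key y F hFs
        have : Filter.liminf (fun n => f n y) Filter.atTop = ⊤ := by
          refine ENNReal.eq_top_of_forall_nnreal_le fun r => ?_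
          refine le_trans ?_ (htop ⌈r⌉₊)
          exact_mod_cast Nat.le_ceil r
        rw [this]
        exact le_top
    calc (∫⁻ y, μH[(0 : ℝ)] (B ∩ P ⁻¹' {y})
            ∂(μH[(m : ℝ)] : Measure (EuclideanSpace ℝ (Fin m))))
        ≤ ∫⁻ y, Filter.liminf (fun n => f n y) Filter.atTop
            ∂(μH[(m : ℝ)] : Measure (EuclideanSpace ℝ (Fin m))) := lintegral_mono hpt
      _ ≤ Filter.liminf (fun n => ∫⁻ y, f n y
            ∂(μH[(m : ℝ)] : Measure (EuclideanSpace ℝ (Fin m)))) Filter.atTop :=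
          lintegral_liminf_le hfmeas
      _ ≤ ENNReal.ofReal (K ^ m) * μH[α * (m : ℝ)] B := by
          refine liminf_le_of_le (by isBoundedDefault) ?_
          intro b hb
          obtain ⟨n, hbn⟩ := hb.exists
          exact hbn.trans (hint n)
end
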